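/- Let α > γ > 0 and P_A, P_B ≥ 0 (exogenous prestige). Given positive group average centralities 𝒞_θ, 𝒞_{−θ}, the unique solution of Y_θ = ((α − γY_θ)𝒞_θ + P_θ)/((α − γ/Y_θ)𝒞_{−θ} + P_{−θ}) with Y_{−θ} = 1/Y_θ is Y_θ = (α𝒞_θ + γ𝒞_{−θ} + P_θ)/(α𝒞_{−θ} + γ𝒞_θ + P_{−θ}), and the resulting equilibrium consumption x_j* = (α − γY_θ)·C_j is strictly decreasing in P_θ and strictly increasing in P_{−θ} (assuming α𝒞_{−θ} + γ𝒞_θ + P_{−θ} > 0 and α − γY_θ > 0). -/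
import Mathlib


/-- exogenous prestige: the unique positive solution of
`Y_θ = ((α − γY_θ)𝒞_θ + P_θ)/((α − γ/Y_θ)𝒞_{−θ} + P_{−θ})` is
`Y_θ = (α𝒞_θ + γ𝒞_{−θ} + P_θ)/(α𝒞_{−θ} + γ𝒞_θ + P_{−θ})`, and the resulting
consumption `x_j* = (α − γY_θ)·C_j` is strictly decreasing in `P_θ` and
strictly increasing in `P_{−θ}`. -/
theorem stmt_15 (α γ Cθ Cmθ Cj : ℝ) (hγ : 0 < γ) (hαγ : γ < α)
    (hCθ : 0 < Cθ) (hCmθ : 0 < Cmθ) (hCj : 0 < Cj) :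
    let Ystar : ℝ → ℝ → ℝ := fun P Pm =>
      (α * Cθ + γ * Cmθ + P) / (α * Cmθ + γ * Cθ + Pm)
    (∀ P Pm : ℝ, 0 ≤ P → 0 ≤ Pm → ∀ Y : ℝ, 0 < Y →
        (Y = ((α - γ * Y) * Cθ + P) / ((α - γ / Y) * Cmθ + Pm) ↔
          Y = Ystar P Pm)) ∧
      (∀ P P' Pm : ℝ, 0 ≤ P → P < P' → 0 ≤ Pm →
        (α - γ * Ystar P' Pm) * Cj < (α - γ * Ystar P Pm) * Cj) ∧
      (∀ P Pm Pm' : ℝ, 0 ≤ P → 0 ≤ Pm → Pm < Pm' →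
        (α - γ * Ystar P Pm) * Cj < (α - γ * Ystar P Pm') * Cj) := by
  intro Ystar
  have hα : 0 < α := hγ.trans hαγ
  refine ⟨?_, ?_, ?_⟩
  · intro P Pm hP hPm Y hY
    have hM : 0 < α * Cmθ + γ * Cθ + Pm := by positivity
    have hN : 0 < α * Cθ + γ * Cmθ + P := by positivity
    constructor
    · intro h
      by_cases hD : (α - γ / Y) * Cmθ + Pm = 0
      · rw [hD, div_zero] at h
        exact absurd h hY.ne'
      · have h2 : Y * ((α - γ / Y) * Cmθ + Pm) = (α - γ * Y) * Cθ + P :=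
          (eq_div_iff hD).mp h
        have hYne : Y ≠ 0 := hY.ne'
        have key : Y * (α * Cmθ + γ * Cθ + Pm) = α * Cθ + γ * Cmθ + P := by
          field_simp at h2
          nlinarith [h2]
        show Y = _ / _
        rw [eq_div_iff hM.ne']
        linarith [key]
    · intro h
      have hYM : Y * (α * Cmθ + γ * Cθ + Pm) = α * Cθ + γ * Cmθ + P := by
        rw [h]
        simp only [Ystar]
        field_simp
      have hYne : Y ≠ 0 := hY.ne'
      have hDpos : 0 < (α - γ / Y) * Cmθ + Pm := by
        have h1 : (α - γ / Y) * Cmθ + Pm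
            = (Y * (α * Cmθ + Pm) - γ * Cmθ) / Y := by
          field_simp
          ring
        rw [h1]
        apply div_pos _ hY
        have hx : 0 < (α * Cθ + γ * Cmθ + P) * (α * Cmθ + Pm)
            - γ * Cmθ * (α * Cmθ + γ * Cθ + Pm) := by
          nlinarith [mul_pos (mul_pos (mul_pos (sub_pos.mpr hαγ)
              (by linarith : (0:ℝ) < α + γ)) hCθ) hCmθ,
            mul_nonneg (mul_nonneg hα.le hCθ.le) hPm,
            mul_nonneg (mul_nonneg hα.le hP) hCmθ.le, mul_nonneg hP hPm]
        have key2 : (Y * (α * Cmθ + Pm) - γ * Cmθ) * (α * Cmθ + γ * Cθ + Pm)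
            = (α * Cθ + γ * Cmθ + P) * (α * Cmθ + Pm)
              - γ * Cmθ * (α * Cmθ + γ * Cθ + Pm) := by
          linear_combination (α * Cmθ + Pm) * hYM
        nlinarith [key2, hx, hM]
      rw [eq_div_iff hDpos.ne']
      field_simp
      nlinarith [hYM]
  · intro P P' Pm hP hPP' hPm
    have hM : 0 < α * Cmθ + γ * Cθ + Pm := by positivity
    have hlt : Ystar P Pm < Ystar P' Pm := by
      show _ / _ < _ / _
      gcongr
    have : α - γ * Ystar P' Pm < α - γ * Ystar P Pm := by nlinarith
    exact mul_lt_mul_of_pos_right this hCj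
  · intro P Pm Pm' hP hPm hPmPm'
    have hM : 0 < α * Cmθ + γ * Cθ + Pm := by positivity
    have hM' : 0 < α * Cmθ + γ * Cθ + Pm' := by linarith
    have hN : 0 < α * Cθ + γ * Cmθ + P := by positivity
    have hlt : Ystar P Pm' < Ystar P Pm := by
      show _ / _ < _ / _
      gcongr
    have : α - γ * Ystar P Pm < α - γ * Ystar P Pm' := by nlinarith
    exact mul_lt_mul_of_pos_right this hCj
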